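/- Let c be a b-fold oriented k-coloring of the directed cycle C_r with k < 4b, and define the r×r binary matrix T by T[i,j] = 1 iff c(u_i) ∩ c(u_j) ≠ ∅. Then T[i,j] = T[i+1,j+1] for all i, j (indices modulo r), i.e., each row of T is a cyclic right-shift of the previous row. -/

import Mathlib

/-- An oriented graph: a directed graph with no loops and no directed 2-cycles. -/
structure OGraph (V : Type*) where
  adj : V → V → Prop
  irrefl : ∀ v, ¬ adj v v
  asymm : ∀ u v, adj u v → ¬ adj v u

/-- A homomorphism of oriented graphs. -/
def OGraph.Hom {V W : Type*} (G : OGraph V) (H : OGraph W) (f : V → W) : Prop :=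
  ∀ u v, G.adj u v → H.adj (f u) (f v)

/-- `f` is a `b`-fold oriented `k`-coloring of `G`. -/
def IsFoldColoring {V : Type*} (G : OGraph V) (b k : ℕ) (f : V → Finset (Fin k)) : Prop :=
  (∀ v, (f v).card = b) ∧
  (∀ u v, G.adj u v → Disjoint (f u) (f v)) ∧
  (∀ x y z w, G.adj x y → G.adj z w → ¬ Disjoint (f x) (f w) → Disjoint (f y) (f z))

/-- The `b`-fold oriented chromatic number. -/
noncomputable def foldChrom {V : Type*} (G : OGraph V) (b : ℕ) : ℕ :=
  sInf {k | ∃ f : V → Finset (Fin k), IsFoldColoring G b k f}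

/-- The fractional oriented chromatic number: the infimum of `k/b` over all
`b`-fold oriented `k`-colorings. -/
noncomputable def fracChrom {V : Type*} (G : OGraph V) : ℝ :=
  sInf {x : ℝ | ∃ (b k : ℕ) (f : V → Finset (Fin k)),
    0 < b ∧ IsFoldColoring G b k f ∧ x = (k : ℝ) / b}

/-- The directed cycle of length `r`. -/
def dirCycle (r : ℕ) (hr : 3 ≤ r) : OGraph (ZMod r) where
  adj u v := v = u + 1
  irrefl := by
    intro v hv
    haveI : NeZero r := ⟨by omega⟩
    have h1 : ((1 : ℕ) : ZMod r) = 0 := by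
      have := left_eq_add.mp hv
      simpa using this
    rw [ZMod.natCast_eq_zero_iff] at h1
    have := Nat.le_of_dvd one_pos h1
    omega
  asymm := by
    intro u v h1 h2
    haveI : NeZero r := ⟨by omega⟩
    have : u = u + 1 + 1 := by rw [← h1]; exact h2
    have h2' : ((2 : ℕ) : ZMod r) = 0 := by
      have := left_eq_add.mp (by rw [add_assoc] at this; exact this)
      push_cast
      simpa [one_add_one_eq_two] using this
    rw [ZMod.natCast_eq_zero_iff] at h2'
    have := Nat.le_of_dvd two_pos h2'
    omega

theorem stmt14 (r b k : ℕ) (hr : 5 < r) (h3 : ¬ (3 ∣ r)) (hk : k < 4 * b)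
    (c : ZMod r → Finset (Fin k))
    (hc : IsFoldColoring (dirCycle r (by omega)) b k c) (i j : ZMod r) :
    (¬ Disjoint (c i) (c j) ↔ ¬ Disjoint (c (i + 1)) (c (j + 1))) := by

  classical
  have hb : 0 < b := by omega
  haveI : NeZero r := ⟨by omega⟩
  obtain ⟨hcard, hdisj, hrule0⟩ := hc
  have hadj : ∀ v : ZMod r, Disjoint (c v) (c (v+1)) := fun v => hdisj v (v+1) rfl
  have hrule : ∀ x w : ZMod r, ¬ Disjoint (c x) (c w) → Disjoint (c (x+1)) (c (w-1)) :=
    fun x w h => hrule0 x (x+1) (w-1) w rfl (show w = w - 1 + 1 by ring) h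
  have hne : ∀ v : ZMod r, (c v).Nonempty := fun v =>
    Finset.card_pos.mp (by rw [hcard]; exact hb)
  have hd2 : ∀ v : ZMod r, Disjoint (c v) (c (v+2)) := by
    intro v
    by_contra h
    have h1 := hrule v (v+2) h
    have h2 : v + 2 - 1 = v + 1 := by ring
    rw [h2] at h1
    exact (hne (v+1)).ne_empty (disjoint_self.mp h1)
  have hfour : ∀ i j : ZMod r, ¬ Disjoint (c i) (c j) ∨ ¬ Disjoint (c i) (c (j+1)) ∨
      ¬ Disjoint (c i) (c (j+2)) := by
    intro i j
    by_contra h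
    push_neg at h
    obtain ⟨h0, h1, h2⟩ := h
    have d01 := hadj j
    have d12 := hadj (j+1)
    have d02 := hd2 j
    have h12 : (j+1)+1 = j+2 := by ring
    rw [h12] at d12
    have dU1 : Disjoint (c j ∪ c (j+1)) (c (j+2)) := by
      rw [Finset.disjoint_union_left]; exact ⟨d02, d12⟩
    have dU2 : Disjoint (c j ∪ c (j+1) ∪ c (j+2)) (c i) := by
      rw [Finset.disjoint_union_left, Finset.disjoint_union_left]
      exact ⟨⟨h0.symm, h1.symm⟩, h2.symm⟩
    have hcardU : (c j ∪ c (j+1) ∪ c (j+2) ∪ c i).card = 4 * b := by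
      rw [Finset.card_union_of_disjoint dU2, Finset.card_union_of_disjoint dU1,
        Finset.card_union_of_disjoint d01, hcard, hcard, hcard, hcard]
      ring
    have hle := Finset.card_le_univ (c j ∪ c (j+1) ∪ c (j+2) ∪ c i)
    rw [hcardU, Fintype.card_fin] at hle
    omega
  have hshift : ∀ i j : ZMod r, ¬ Disjoint (c i) (c j) → ¬ Disjoint (c (i+1)) (c (j+1)) := by
    intro i j h h11
    have h1 : Disjoint (c (i+1)) (c (j-1)) := hrule i j h
    have h2 : Disjoint (c (j+1)) (c (i-1)) := hrule j i (fun hd => h hd.symm)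
    have e1 : j - 1 + 1 = j := by ring
    have e2 : j - 1 + 2 = j + 1 := by ring
    have hmid1 : ¬ Disjoint (c (i+1)) (c j) := by
      rcases hfour (i+1) (j-1) with h' | h' | h'
      · exact absurd h1 h'
      · rwa [e1] at h'
      · rw [e2] at h'; exact absurd h11 h'
    have e3 : i - 1 + 1 = i := by ring
    have e4 : i - 1 + 2 = i + 1 := by ring
    have hmid2 : ¬ Disjoint (c i) (c (j+1)) := by
      rcases hfour (j+1) (i-1) with h' | h' | h'
      · exact absurd h2 h'
      · rw [e3] at h'; exact fun hd => h' hd.symm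
      · rw [e4] at h'; exact absurd h11.symm h'
    have h3' := hrule j (i+1) (fun hd => hmid1 hd.symm)
    have e5 : i + 1 - 1 = i := by ring
    rw [e5] at h3'
    exact hmid2 h3'.symm
  set A : ZMod r → Finset (ZMod r) :=
    fun i => Finset.univ.filter (fun j => ¬ Disjoint (c i) (c j)) with hA
  have hmemA : ∀ i j : ZMod r, j ∈ A i ↔ ¬ Disjoint (c i) (c j) := by
    intro i j; simp [hA]
  have hinj : Function.Injective (fun x : ZMod r => x + 1) :=
    fun a b h => by simpa using h
  have hsub : ∀ i : ZMod r, (A i).image (· + 1) ⊆ A (i+1) := by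
    intro i x hx
    rw [Finset.mem_image] at hx
    obtain ⟨j', hj', rfl⟩ := hx
    exact (hmemA _ _).mpr (hshift i j' ((hmemA _ _).mp hj'))
  have hcardim : ∀ i : ZMod r, (A i).card ≤ (A (i+1)).card := by
    intro i
    calc (A i).card = ((A i).image (· + 1)).card :=
          (Finset.card_image_of_injective _ hinj).symm
      _ ≤ (A (i+1)).card := Finset.card_le_card (hsub i)
  have hstep : ∀ (i : ZMod r) (n : ℕ), (A i).card ≤ (A (i + n)).card := by
    intro i n
    induction n with
    | zero => simp
    | succ m ih =>
      have hh := hcardim (i + m)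
      have e : (i + m) + 1 = i + ((m+1 : ℕ) : ZMod r) := by push_cast; ring
      rw [e] at hh
      exact le_trans ih hh
  have hceq : ∀ i : ZMod r, (A i).card = (A (i+1)).card := by
    intro i
    refine le_antisymm (hcardim i) ?_
    have hh := hstep (i+1) (r-1)
    have h1 : ((r-1:ℕ) : ZMod r) + 1 = 0 := by
      have e : ((r-1:ℕ) : ZMod r) + 1 = ((r-1+1 : ℕ) : ZMod r) := by push_cast; ring
      rw [e, Nat.sub_add_cancel (by omega), ZMod.natCast_self]
    have e : (i+1) + ((r-1:ℕ):ZMod r) = i := by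
      calc (i+1) + ((r-1:ℕ):ZMod r) = i + (((r-1:ℕ):ZMod r) + 1) := by ring
        _ = i := by rw [h1, add_zero]
    rwa [e] at hh
  have hAeq : (A i).image (· + 1) = A (i+1) := by
    apply Finset.eq_of_subset_of_card_le (hsub i)
    rw [Finset.card_image_of_injective _ hinj, hceq i]
  constructor
  · exact hshift i j
  · intro h
    have hm : j + 1 ∈ A (i+1) := (hmemA _ _).mpr h
    rw [← hAeq, Finset.mem_image] at hm
    obtain ⟨j', hj', he⟩ := hm
    have hj : j' = j := add_right_cancel he
    rw [← hj]
    exact (hmemA _ _).mp hj'
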